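/- Let r ≥ 3 be odd and A a primitive 2r-th or r-th root of unity. Then the matrix s̃ with entries s̃_{ij} = (-1)^{i+j}[(i+1)(j+1)]_A (0 ≤ i, j ≤ r-2) satisfies (s̃^2)_{ij} = -2r/(A^2 - A^{-2})^2 when i = j or i + j = r - 2, and (s̃^2)_{ij} = 0 otherwise; consequently s̃ has rank (r-1)/2. -/

import Mathlib

/-- The quantum integer `[m]_A = (A^{2m} - A^{-2m})/(A^2 - A^{-2})`. -/
noncomputable def qint (A : ℂ) (m : ℤ) : ℂ :=
  (A ^ (2 * m) - A ^ (-(2 * m))) / (A ^ (2 : ℤ) - A ^ (-2 : ℤ))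

-- geometric sum lemma
lemma geo_aux (r : ℕ) (hr : 0 < r) (ζ : ℂ) (hζ : IsPrimitiveRoot ζ r) (c : ℤ) :
    ∑ k ∈ Finset.range (r-1), ζ ^ (((k:ℤ)+1) * c) = if (r:ℤ) ∣ c then (r:ℂ) - 1 else -1 := by
  have hζ0 : ζ ≠ 0 := by
    intro h; subst h
    simpa [hr.ne', zero_pow] using hζ.pow_eq_one
  have hx : ∀ k : ℕ, ζ ^ (((k:ℤ)+1) * c) = (ζ ^ c) ^ (k+1) := by
    intro k
    rw [mul_comm, zpow_mul]
    norm_cast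
  simp only [hx]
  have hsum : ∑ m ∈ Finset.range r, (ζ^c)^m
      = (∑ k ∈ Finset.range (r-1), (ζ^c)^(k+1)) + 1 := by
    conv_lhs => rw [show r = (r-1)+1 by omega, Finset.sum_range_succ']
    simp
  by_cases hdvd : (r:ℤ) ∣ c
  · have h1 : ζ ^ c = 1 := (hζ.zpow_eq_one_iff_dvd c).mpr hdvd
    simp [h1, hdvd]
    push_cast [Nat.cast_sub (by omega : 1 ≤ r)]
    ring
  · have h1 : ζ ^ c ≠ 1 := fun h => hdvd ((hζ.zpow_eq_one_iff_dvd c).mp h)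
    have hxr : (ζ^c)^r = 1 := by
      rw [← zpow_natCast (ζ^c) r, ← zpow_mul, mul_comm, zpow_mul, zpow_natCast,
        hζ.pow_eq_one, one_zpow]
    have := geom_sum_eq h1 r
    rw [hxr] at this
    simp only [hdvd, if_false]
    have h0 : ∑ m ∈ Finset.range r, (ζ^c)^m = 0 := by rw [this]; simp
    rw [h0] at hsum
    linear_combination -hsum

lemma setup_aux (r : ℕ) (hr : 3 ≤ r) (hodd : Odd r) (A : ℂ)
    (hA : IsPrimitiveRoot A (2 * r) ∨ IsPrimitiveRoot A r)
    (hA4 : A ^ (4 : ℕ) ≠ 1) :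
    IsPrimitiveRoot (A ^ (2:ℤ)) r ∧ (A ^ (2 : ℤ) - A ^ (-2 : ℤ)) ≠ 0 := by
  have hA0 : A ≠ 0 := by
    rcases hA with h | h
    · exact h.ne_zero (by omega)
    · exact h.ne_zero (by omega)
  have hprim : IsPrimitiveRoot (A ^ (2:ℤ)) r := by
    rw [show (2:ℤ) = ((2:ℕ):ℤ) by norm_num, zpow_natCast]
    rcases hA with h | h
    · exact h.pow (by omega) rfl
    · exact h.pow_of_coprime 2 (Nat.coprime_two_left.mpr hodd)
  refine ⟨hprim, ?_⟩
  intro h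
  apply hA4
  have h2 : A ^ (2:ℤ) = A ^ (-2:ℤ) := by linear_combination h
  have : A ^ (4:ℤ) = 1 := by
    have := congrArg (· * A ^ (2:ℤ)) h2
    simp only [← zpow_add₀ hA0] at this
    norm_num at this
    exact this
  have h4 : A ^ ((4:ℕ):ℤ) = 1 := by exact_mod_cast this
  rwa [zpow_natCast] at h4

lemma part1_aux (r : ℕ) (hr : 3 ≤ r) (hodd : Odd r) (A : ℂ)
    (hA : IsPrimitiveRoot A (2 * r) ∨ IsPrimitiveRoot A r)
    (hA4 : A ^ (4 : ℕ) ≠ 1)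
    (S : Matrix (Fin (r - 1)) (Fin (r - 1)) ℂ)
    (hS : ∀ i j : Fin (r - 1),
      S i j = (-1 : ℂ) ^ ((i : ℕ) + (j : ℕ)) *
        qint A ((((i : ℕ) + 1) * ((j : ℕ) + 1) : ℕ))) :
    ∀ i j : Fin (r - 1),
      (S * S) i j =
        if i = j ∨ (i : ℕ) + (j : ℕ) = r - 2 then
          (-2 * r : ℂ) / (A ^ (2 : ℤ) - A ^ (-2 : ℤ)) ^ 2
        else 0 := by
  obtain ⟨hprim, hd⟩ := setup_aux r hr hodd A hA hA4
  set ζ : ℂ := A ^ (2:ℤ) with hζdef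
  set d : ℂ := A ^ (2 : ℤ) - A ^ (-2 : ℤ) with hddef
  have hζ0 : ζ ≠ 0 := by
    intro h; rw [h] at hprim
    exact absurd hprim.pow_eq_one (by simp [zero_pow (show r ≠ 0 by omega)])
  have hq : ∀ m : ℤ, qint A m = (ζ ^ m - ζ ^ (-m)) / d := by
    intro m
    unfold qint
    rw [hζdef, ← zpow_mul, ← zpow_mul, hddef]
    ring_nf
  have ez : ∀ u v : ℤ, (ζ^u - ζ^(-u)) * (ζ^v - ζ^(-v))
      = ζ^(u+v) + ζ^(-(u+v)) - ζ^(u-v) - ζ^(-(u-v)) := by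
    intro u v
    rw [sub_mul, mul_sub, mul_sub, ← zpow_add₀ hζ0, ← zpow_add₀ hζ0, ← zpow_add₀ hζ0,
      ← zpow_add₀ hζ0, show u + -v = u - v by ring, show -u + v = -(u-v) by ring,
      show -u + -v = -(u+v) by ring]
    ring
  have key : ∀ c : ℤ, ∑ k : Fin (r-1), ζ^((((k:ℕ):ℤ)+1)*c)
      = if (r:ℤ) ∣ c then (r:ℂ) - 1 else -1 := by
    intro c
    rw [← geo_aux r (by omega) ζ hprim c]
    exact Fin.sum_univ_eq_sum_range (fun k => ζ^(((k:ℤ)+1)*c)) (r-1)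
  intro i j
  have hi : (i:ℕ) ≤ r - 2 := by omega
  have hj : (j:ℕ) ≤ r - 2 := by omega
  set c₁ : ℤ := (i:ℤ) + (j:ℤ) + 2 with hc₁
  set c₂ : ℤ := (i:ℤ) - (j:ℤ) with hc₂
  have expand : ∀ k : Fin (r-1), S i k * S k j
      = (-1:ℂ)^((i:ℕ)+(j:ℕ)) *
        ((ζ^((((k:ℕ):ℤ)+1)*c₁) + ζ^((((k:ℕ):ℤ)+1)*(-c₁)) - ζ^((((k:ℕ):ℤ)+1)*c₂)
          - ζ^((((k:ℕ):ℤ)+1)*(-c₂))) / d^2) := by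
    intro k
    rw [hS i k, hS k j, hq, hq]
    push_cast
    set u : ℤ := ((i:ℤ)+1) * ((k:ℤ)+1) with hu
    set v : ℤ := ((k:ℤ)+1) * ((j:ℤ)+1) with hv
    rw [show (((k:ℕ):ℤ)+1)*c₁ = u + v by rw [hu, hv, hc₁]; ring,
        show (((k:ℕ):ℤ)+1)*(-c₁) = -(u + v) by rw [hu, hv, hc₁]; ring,
        show (((k:ℕ):ℤ)+1)*c₂ = u - v by rw [hu, hv, hc₂]; ring,
        show (((k:ℕ):ℤ)+1)*(-c₂) = -(u - v) by rw [hu, hv, hc₂]; ring,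
        ← ez u v]
    have hgen : ∀ (a b X Y D : ℂ), (a * (X/D)) * (b * (Y/D)) = (a*b) * (X*Y/D^2) := by
      intros; ring
    have sign : ((-1:ℂ))^((i:ℕ)+(k:ℕ)) * (-1)^((k:ℕ)+(j:ℕ)) = (-1)^((i:ℕ)+(j:ℕ)) := by
      rw [← pow_add, show ((i:ℕ)+(k:ℕ))+((k:ℕ)+(j:ℕ)) = ((i:ℕ)+(j:ℕ)) + 2*(k:ℕ) by ring,
        pow_add, pow_mul]
      norm_num
    rw [hgen, sign]
  rw [Matrix.mul_apply]
  simp only [expand]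
  rw [← Finset.mul_sum, ← Finset.sum_div, Finset.sum_sub_distrib, Finset.sum_sub_distrib,
    Finset.sum_add_distrib, key c₁, key (-c₁), key c₂, key (-c₂)]
  have hdc₁ : (r:ℤ) ∣ c₁ ↔ (i:ℕ) + (j:ℕ) = r - 2 := by
    constructor
    · rintro ⟨t, ht⟩
      have hb1 : (2:ℤ) ≤ c₁ := by rw [hc₁]; omega
      have hb2 : c₁ ≤ 2*(r:ℤ) - 2 := by rw [hc₁]; omega
      have ht1 : t = 1 := by
        have h1 : 1 ≤ t := by
          by_contra h
          have h0 : (r:ℤ) * t ≤ 0 :=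
            mul_nonpos_of_nonneg_of_nonpos (by omega) (by omega)
          rw [ht] at hb1; linarith
        have h2 : t ≤ 1 := by
          by_contra h
          have h0 : (r:ℤ) * 2 ≤ (r:ℤ) * t :=
            mul_le_mul_of_nonneg_left (by omega) (by omega)
          rw [ht] at hb2; linarith
        omega
      rw [ht1, mul_one] at ht
      rw [hc₁] at ht
      omega
    · intro h
      exact ⟨1, by rw [hc₁]; omega⟩
  have hdc₂ : (r:ℤ) ∣ c₂ ↔ i = j := by
    constructor
    · rintro ⟨t, ht⟩
      have hb1 : -((r:ℤ) - 2) ≤ c₂ := by rw [hc₂]; omega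
      have hb2 : c₂ ≤ (r:ℤ) - 2 := by rw [hc₂]; omega
      have ht0 : t = 0 := by
        have h1 : t ≤ 0 := by
          by_contra h
          have h0 : (r:ℤ) * 1 ≤ (r:ℤ) * t :=
            mul_le_mul_of_nonneg_left (by omega) (by omega)
          rw [ht] at hb2; linarith
        have h2 : 0 ≤ t := by
          by_contra h
          have h0 : (r:ℤ) * t ≤ (r:ℤ) * (-1) :=
            mul_le_mul_of_nonneg_left (by omega) (by omega)
          rw [ht] at hb1; linarith
        omega
      rw [ht0, mul_zero] at ht
      rw [hc₂] at ht
      exact Fin.ext (by omega)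
    · rintro rfl
      exact ⟨0, by rw [hc₂]; ring⟩
  simp only [dvd_neg, hdc₁, hdc₂]
  by_cases hQ : i = j
  · subst hQ
    have hP : ¬ ((i:ℕ) + (i:ℕ) = r - 2) := by obtain ⟨m, hm⟩ := hodd; omega
    rw [if_pos (Or.inl rfl)]
    simp only [hP, eq_self_iff_true, if_true, if_false]
    have hsgn : ((-1:ℂ))^((i:ℕ)+(i:ℕ)) = 1 := Even.neg_one_pow ⟨(i:ℕ), rfl⟩
    rw [hsgn, one_mul, div_eq_div_iff (pow_ne_zero 2 hd) (pow_ne_zero 2 hd)]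
    push_cast
    ring
  · by_cases hP : (i:ℕ) + (j:ℕ) = r - 2
    · rw [if_pos (Or.inr hP)]
      simp only [hP, hQ, eq_self_iff_true, if_true, if_false]
      have hsgn : ((-1:ℂ))^(r-2) = -1 :=
        Odd.neg_one_pow (by obtain ⟨m, hm⟩ := hodd; exact ⟨m - 1, by omega⟩)
      rw [hsgn, neg_one_mul, ← neg_div, div_eq_div_iff (pow_ne_zero 2 hd) (pow_ne_zero 2 hd)]
      push_cast
      ring
    · rw [if_neg (by tauto)]
      simp only [hP, hQ, if_false]
      norm_num

lemma mat_rank_add_le {n : Type*} [Fintype n] (M N : Matrix n n ℂ) :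
    (M + N).rank ≤ M.rank + N.rank := by
  rw [Matrix.rank, Matrix.rank, Matrix.rank]
  have h : LinearMap.range (M + N).mulVecLin ≤
      LinearMap.range M.mulVecLin ⊔ LinearMap.range N.mulVecLin := by
    rintro x ⟨v, rfl⟩
    rw [Matrix.mulVecLin_add]
    exact Submodule.add_mem_sup ⟨v, rfl⟩ ⟨v, rfl⟩
  exact (Submodule.finrank_mono h).trans
    (Submodule.finrank_add_le_finrank_add_finrank _ _)

lemma mat_rank_smul {n : Type*} [Fintype n] [DecidableEq n] (c : ℂ) (hc : c ≠ 0)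
    (M : Matrix n n ℂ) : (c • M).rank = M.rank := by
  have h : c • M = (c • (1 : Matrix n n ℂ)) * M := by
    rw [Matrix.smul_mul, Matrix.one_mul]
  rw [h, Matrix.rank_mul_eq_right_of_isUnit_det]
  rw [Matrix.det_smul, Matrix.det_one, mul_one]
  exact (pow_ne_zero _ hc).isUnit

lemma rank_one_add_J (r : ℕ) (hr : 3 ≤ r) (hodd : Odd r)
    (J : Matrix (Fin (r-1)) (Fin (r-1)) ℂ)
    (hJ : ∀ i j : Fin (r-1), J i j = if (i:ℕ) + (j:ℕ) = r - 2 then 1 else 0) :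
    (1 + J).rank = (r-1)/2 := by
  have hmulJ : ∀ (M : Matrix (Fin (r-1)) (Fin (r-1)) ℂ) (i j : Fin (r-1)),
      (M * J) i j = M i ⟨r - 2 - (j:ℕ), by omega⟩ := by
    intro M i j
    rw [Matrix.mul_apply]
    have hind : ∀ k : Fin (r-1), J k j = if k = ⟨r - 2 - (j:ℕ), by omega⟩ then 1 else 0 := by
      intro k
      rw [hJ]
      congr 1
      rw [eq_iff_iff, Fin.ext_iff]
      simp only [Fin.val_mk]
      omega
    simp only [hind, mul_ite, mul_one, mul_zero]
    rw [Finset.sum_ite_eq' Finset.univ _ (fun k => M i k)]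
    simp
  have hJJ : J * J = 1 := by
    ext i j
    rw [hmulJ J i j, hJ, Matrix.one_apply]
    congr 1
    rw [eq_iff_iff, Fin.ext_iff]
    simp only [Fin.val_mk]
    omega
  set D : Matrix (Fin (r-1)) (Fin (r-1)) ℂ :=
    Matrix.diagonal (fun i : Fin (r-1) => (-1:ℂ)^(i:ℕ)) with hDdef
  have hDdet : IsUnit D.det := by
    rw [hDdef, Matrix.det_diagonal]
    exact (Finset.prod_ne_zero_iff.mpr (fun i _ => pow_ne_zero _ (by norm_num))).isUnit
  have hDD : D * D = 1 := by
    rw [hDdef, Matrix.diagonal_mul_diagonal]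
    have : (fun i : Fin (r-1) => (-1:ℂ)^(i:ℕ) * (-1)^(i:ℕ)) = fun _ => 1 := by
      funext i
      rw [← pow_add]
      exact Even.neg_one_pow ⟨(i:ℕ), rfl⟩
    rw [this, Matrix.diagonal_one]
  have hDJD : D * J * D = -J := by
    ext i j
    rw [Matrix.mul_diagonal, Matrix.diagonal_mul, Matrix.neg_apply, hJ]
    by_cases h : (i:ℕ) + (j:ℕ) = r - 2
    · rw [if_pos h, mul_one]
      rw [mul_comm, ← pow_add, show (j:ℕ) + (i:ℕ) = r - 2 by omega]
      exact Odd.neg_one_pow (by obtain ⟨m, hm⟩ := hodd; exact ⟨m - 1, by omega⟩)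
    · rw [if_neg h]
      ring
  have h1J : D * (1 + J) * D = 1 - J := by
    rw [Matrix.mul_add, Matrix.mul_one, Matrix.add_mul, hDD, hDJD]
    abel
  have hrankeq : (1 - J).rank = (1 + J).rank := by
    rw [← h1J, Matrix.rank_mul_eq_left_of_isUnit_det D _ hDdet,
      Matrix.rank_mul_eq_right_of_isUnit_det D _ hDdet]
  have hmz : (1 + J) * (1 - J) = 0 := by
    rw [Matrix.mul_sub, Matrix.mul_one, Matrix.add_mul, Matrix.one_mul, hJJ]
    abel
  have le1 : (1 + J).rank + (1 - J).rank ≤ r - 1 := by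
    simpa using Matrix.rank_add_rank_le_card_of_mul_eq_zero hmz
  have ge1 : r - 1 ≤ (1 + J).rank + (1 - J).rank := by
    have h2 : ((2:ℂ) • (1 : Matrix (Fin (r-1)) (Fin (r-1)) ℂ)).rank = r - 1 := by
      rw [mat_rank_smul _ two_ne_zero, Matrix.rank_one, Fintype.card_fin]
    have h3 : (2:ℂ) • (1 : Matrix (Fin (r-1)) (Fin (r-1)) ℂ) = (1 + J) + (1 - J) := by
      rw [two_smul]
      abel
    calc r - 1 = ((2:ℂ) • (1 : Matrix (Fin (r-1)) (Fin (r-1)) ℂ)).rank := h2.symm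
      _ = ((1 + J) + (1 - J)).rank := by rw [h3]
      _ ≤ (1 + J).rank + (1 - J).rank := mat_rank_add_le _ _
  omega

lemma mul_J_apply (r : ℕ) (hr : 3 ≤ r)
    (J : Matrix (Fin (r-1)) (Fin (r-1)) ℂ)
    (hJ : ∀ i j : Fin (r-1), J i j = if (i:ℕ) + (j:ℕ) = r - 2 then 1 else 0)
    (M : Matrix (Fin (r-1)) (Fin (r-1)) ℂ) (i j : Fin (r-1)) :
    (M * J) i j = M i ⟨r - 2 - (j:ℕ), by omega⟩ := by
  rw [Matrix.mul_apply]
  have hind : ∀ k : Fin (r-1), J k j = if k = ⟨r - 2 - (j:ℕ), by omega⟩ then 1 else 0 := by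
    intro k
    rw [hJ]
    congr 1
    rw [eq_iff_iff, Fin.ext_iff]
    simp only [Fin.val_mk]
    omega
  simp only [hind, mul_ite, mul_one, mul_zero]
  rw [Finset.sum_ite_eq' Finset.univ _ (fun k => M i k)]
  simp

theorem smatrix_square_and_rank_odd (r : ℕ) (hr : 3 ≤ r) (hodd : Odd r) (A : ℂ)
    (hA : IsPrimitiveRoot A (2 * r) ∨ IsPrimitiveRoot A r)
    (hA4 : A ^ (4 : ℕ) ≠ 1)
    (S : Matrix (Fin (r - 1)) (Fin (r - 1)) ℂ)
    (hS : ∀ i j : Fin (r - 1),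
      S i j = (-1 : ℂ) ^ ((i : ℕ) + (j : ℕ)) *
        qint A ((((i : ℕ) + 1) * ((j : ℕ) + 1) : ℕ))) :
    (∀ i j : Fin (r - 1),
      (S * S) i j =
        if i = j ∨ (i : ℕ) + (j : ℕ) = r - 2 then
          (-2 * r : ℂ) / (A ^ (2 : ℤ) - A ^ (-2 : ℤ)) ^ 2
        else 0) ∧
    S.rank = (r - 1) / 2 := by
  obtain ⟨hprim, hd⟩ := setup_aux r hr hodd A hA hA4
  have hSS := part1_aux r hr hodd A hA hA4 S hS
  refine ⟨hSS, ?_⟩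
  have hA0 : A ≠ 0 := by
    rcases hA with h | h
    · exact h.ne_zero (by omega)
    · exact h.ne_zero (by omega)
  set d : ℂ := A ^ (2 : ℤ) - A ^ (-2 : ℤ) with hddef
  set c : ℂ := (-2 * r : ℂ) / d ^ 2 with hcdef
  have hc : c ≠ 0 := by
    rw [hcdef]
    apply div_ne_zero
    · simp only [neg_mul, ne_eq, neg_eq_zero, mul_eq_zero, not_or]
      exact ⟨two_ne_zero, Nat.cast_ne_zero.mpr (by omega)⟩
    · exact pow_ne_zero 2 hd
  -- periodicity lemmas for qint
  have h2r : A ^ ((2:ℤ) * (r:ℤ)) = 1 := by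
    rcases hA with h | h
    · have h1 := h.pow_eq_one
      rw [show (2:ℤ)*(r:ℤ) = ((2*r : ℕ) : ℤ) by push_cast; ring, zpow_natCast]
      exact h1
    · have h1 : A ^ (r:ℕ) = 1 := h.pow_eq_one
      rw [show (2:ℤ)*(r:ℤ) = ((r : ℕ) : ℤ)*2 by push_cast; ring, zpow_mul, zpow_natCast, h1,
        one_zpow]
  have hper : ∀ m t : ℤ, qint A (m + r * t) = qint A m := by
    intro m t
    unfold qint
    have h1 : A ^ (2*(m + (r:ℤ)*t)) = A ^ (2*m) := by
      rw [show 2*(m + (r:ℤ)*t) = 2*m + (2*(r:ℤ))*t by ring, zpow_add₀ hA0,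
        zpow_mul A (2*(r:ℤ)) t, h2r, one_zpow, mul_one]
    have h2 : A ^ (-(2*(m + (r:ℤ)*t))) = A ^ (-(2*m)) := by
      rw [show -(2*(m + (r:ℤ)*t)) = -(2*m) + (2*(r:ℤ))*(-t) by ring, zpow_add₀ hA0,
        zpow_mul A (2*(r:ℤ)) (-t), h2r, one_zpow, mul_one]
    rw [h1, h2]
  have hqneg : ∀ m : ℤ, qint A (-m) = - qint A m := by
    intro m
    unfold qint
    rw [show (2:ℤ)*(-m) = -(2*m) by ring, neg_neg]
    ring
  -- the matrix J
  set J : Matrix (Fin (r-1)) (Fin (r-1)) ℂ :=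
    Matrix.of (fun i j : Fin (r-1) => if (i:ℕ) + (j:ℕ) = r - 2 then 1 else 0) with hJdef
  have hJ : ∀ i j : Fin (r-1), J i j = if (i:ℕ) + (j:ℕ) = r - 2 then 1 else 0 :=
    fun i j => rfl
  have hS2 : S * S = c • (1 + J) := by
    ext i j
    rw [hSS i j, Matrix.smul_apply, Matrix.add_apply, Matrix.one_apply, hJ]
    by_cases h1 : i = j
    · have h2 : ¬((i:ℕ) + (j:ℕ) = r - 2) := by
        subst h1
        obtain ⟨m, hm⟩ := hodd
        omega
      rw [if_pos (Or.inl h1), if_pos h1, if_neg h2]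
      simp
    · by_cases h2 : (i:ℕ) + (j:ℕ) = r - 2
      · rw [if_pos (Or.inr h2), if_neg h1, if_pos h2]
        simp
      · rw [if_neg (by tauto), if_neg h1, if_neg h2]
        simp
  have hSJ : S * J = S := by
    ext i j
    rw [mul_J_apply r hr J hJ S i j, hS, hS]
    have hj : (j:ℕ) ≤ r - 2 := by omega
    simp only [Fin.val_mk]
    have e1 : qint A (((((i:ℕ)+1) * ((r - 2 - (j:ℕ))+1) : ℕ)) : ℤ)
        = - qint A (((((i:ℕ)+1) * ((j:ℕ)+1) : ℕ)) : ℤ) := by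
      have harg : (((((i:ℕ)+1) * ((r - 2 - (j:ℕ))+1) : ℕ)) : ℤ)
          = -(((((i:ℕ)+1) * ((j:ℕ)+1) : ℕ)) : ℤ) + (r:ℤ) * ((i:ℤ)+1) := by
        have ha : ((r - 2 - (j:ℕ) : ℕ) : ℤ) = (r:ℤ) - 2 - (j:ℤ) := by omega
        push_cast [ha]
        ring
      rw [harg, hper, hqneg]
    have e2 : ((-1:ℂ))^((i:ℕ) + (r - 2 - (j:ℕ))) = -(-1:ℂ)^((i:ℕ)+(j:ℕ)) := by
      calc ((-1:ℂ))^((i:ℕ) + (r - 2 - (j:ℕ)))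
          = ((-1:ℂ))^((i:ℕ) + (r - 2 - (j:ℕ))) * ((-1:ℂ)^2)^(j:ℕ) := by norm_num
        _ = ((-1:ℂ))^((i:ℕ) + (r - 2 - (j:ℕ)) + 2*(j:ℕ)) := by
            rw [← pow_mul, ← pow_add]
        _ = ((-1:ℂ))^(((i:ℕ) + (j:ℕ)) + (r-2)) := by congr 1; omega
        _ = ((-1:ℂ))^((i:ℕ)+(j:ℕ)) * (-1:ℂ)^(r-2) := pow_add _ _ _
        _ = -(-1:ℂ)^((i:ℕ)+(j:ℕ)) := by
            rw [show ((-1:ℂ))^(r-2) = -1 from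
              Odd.neg_one_pow (by obtain ⟨m, hm⟩ := hodd; exact ⟨m-1, by omega⟩)]
            ring
    rw [e1, e2]
    ring
  have h2c : (2*c : ℂ) ≠ 0 := mul_ne_zero two_ne_zero hc
  have hS3 : S * (S * S) = (2*c) • S := by
    rw [hS2, Matrix.mul_smul, Matrix.mul_add, Matrix.mul_one, hSJ,
      show S + S = (2:ℂ) • S from (two_smul ℂ S).symm, smul_smul, mul_comm]
  have e4 : S.rank = (S*S).rank := by
    refine le_antisymm ?_ (Matrix.rank_mul_le_left S S)
    calc S.rank = ((2*c) • S).rank := (mat_rank_smul _ h2c S).symm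
      _ = (S * (S * S)).rank := by rw [hS3]
      _ ≤ (S*S).rank := Matrix.rank_mul_le_right _ _
  have e5 : (S*S).rank = (1+J).rank := by
    rw [hS2]
    exact mat_rank_smul _ hc _
  rw [e4, e5, rank_one_add_J r hr hodd J hJ]
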